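/- For every integer k ≥ 2, ζ(k) = π^k · √((−1)^{k+1} · B_{2k} · 2^{2k−1} / (2k)!) · ∏_p ((p^k + 1)/(p^k − 1))^{1/2}, where the product runs over all prime numbers p and converges. -/

import Mathlib

open Real Complex

section aux

/-- The completely multiplicative function `n ↦ (n^k)⁻¹` on `ℝ`, for `k ≥ 1`. -/
noncomputable def zetaReal (k : ℕ) (hk : k ≠ 0) : ℕ →*₀ ℝ where
  toFun n := ((n : ℝ) ^ k)⁻¹
  map_zero' := by simp [zero_pow hk]
  map_one' := by simp
  map_mul' m n := by push_cast [mul_pow, mul_inv]; ring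

lemma zetaReal_summable {k : ℕ} (hk : 2 ≤ k) (hk0 : k ≠ 0) :
    Summable fun n => ‖zetaReal k hk0 n‖ := by
  have : Summable (fun n => 1 / (n : ℝ) ^ k : ℕ → ℝ) :=
    summable_one_div_nat_pow.mpr (by omega)
  refine this.congr fun n => ?_
  simp only [zetaReal, MonoidWithZeroHom.coe_mk, ZeroHom.coe_mk, Real.norm_eq_abs,
    one_div]
  rw [_root_.abs_of_nonneg (by positivity)]

lemma hasProd_zetaReal {k : ℕ} (hk : 2 ≤ k) :
    HasProd (fun p : Nat.Primes => (1 - (((p : ℕ) : ℝ) ^ k)⁻¹)⁻¹)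
      (∑' n : ℕ, ((n : ℝ) ^ k)⁻¹) := by
  have h0 : k ≠ 0 := by omega
  have := EulerProduct.eulerProduct_completely_multiplicative_hasProd
    (zetaReal_summable hk h0)
  simpa only [zetaReal, MonoidWithZeroHom.coe_mk, ZeroHom.coe_mk] using this

lemma hasProd_inv' {ι : Type*} {f : ι → ℝ} {a : ℝ} (h : HasProd f a) (ha : a ≠ 0) :
    HasProd (fun i => (f i)⁻¹) a⁻¹ := by
  unfold HasProd at h ⊢
  simpa only [← Finset.prod_inv_distrib] using h.inv₀ ha

lemma hasProd_sqrt {ι : Type*} {f : ι → ℝ} {a : ℝ} (h : HasProd f a) (hf : ∀ i, 0 ≤ f i) :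
    HasProd (fun i => Real.sqrt (f i)) (Real.sqrt a) := by
  unfold HasProd at h ⊢
  have heq : ∀ s : Finset ι, ∏ i ∈ s, Real.sqrt (f i) = Real.sqrt (∏ i ∈ s, f i) := by
    intro s
    simp_rw [Real.sqrt_eq_rpow]
    exact Real.finset_prod_rpow s f (fun i _ => hf i) _
  simp_rw [heq]
  exact (Real.continuous_sqrt.continuousAt.tendsto.comp h)

end aux

/-- For every integer `k ≥ 2`,
`ζ(k) = π^k · √((−1)^{k+1} · B_{2k} · 2^{2k−1} / (2k)!) · ∏_p ((p^k + 1)/(p^k − 1))^{1/2}`,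
the product running over all primes `p` and converging. -/
theorem zeta_nat_prime_prod_ratio (k : ℕ) (hk : 2 ≤ k) :
    Multipliable (fun p : Nat.Primes =>
      ((((p : ℕ) : ℝ) ^ k + 1) / (((p : ℕ) : ℝ) ^ k - 1)) ^ (1 / 2 : ℝ)) ∧
    riemannZeta ((k : ℕ) : ℂ) =
      ((Real.pi ^ k *
        Real.sqrt ((-1) ^ (k + 1) * (bernoulli (2 * k) : ℝ) * 2 ^ (2 * k - 1) /
          ((2 * k).factorial : ℝ)) *
        ∏' p : Nat.Primes,
          ((((p : ℕ) : ℝ) ^ k + 1) / (((p : ℕ) : ℝ) ^ k - 1)) ^ (1 / 2 : ℝ)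
        : ℝ) : ℂ) := by
  set Zk : ℝ := ∑' n : ℕ, ((n : ℝ) ^ k)⁻¹ with hZk
  set Z2k : ℝ := ∑' n : ℕ, ((n : ℝ) ^ (2 * k))⁻¹ with hZ2k
  have hple : ∀ p : Nat.Primes, (2 : ℝ) ≤ ((p : ℕ) : ℝ) := fun p => by
    exact_mod_cast p.2.two_le
  have hpk : ∀ p : Nat.Primes, (2 : ℝ) ≤ ((p : ℕ) : ℝ) ^ k := fun p =>
    le_trans (le_self_pow₀ one_le_two (by omega))
      (pow_le_pow_left₀ (by norm_num) (hple p) k)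
  have hsk : Summable (fun n : ℕ => ((n : ℝ) ^ k)⁻¹) := by
    simpa [one_div] using summable_one_div_nat_pow.mpr (show 1 < k by omega)
  have hs2k : Summable (fun n : ℕ => ((n : ℝ) ^ (2 * k))⁻¹) := by
    simpa [one_div] using summable_one_div_nat_pow.mpr (show 1 < 2 * k by omega)
  have hZk_pos : 0 < Zk :=
    Summable.tsum_pos hsk (fun n => by positivity) 1 (by norm_num)
  have hZ2k_pos : 0 < Z2k :=
    Summable.tsum_pos hs2k (fun n => by positivity) 1 (by norm_num)
  have hPk : HasProd (fun p : Nat.Primes => (1 - (((p : ℕ) : ℝ) ^ k)⁻¹)⁻¹) Zk :=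
    hasProd_zetaReal hk
  have hP2k : HasProd (fun p : Nat.Primes => (1 - (((p : ℕ) : ℝ) ^ (2 * k))⁻¹)⁻¹) Z2k :=
    hasProd_zetaReal (by omega)
  have hP2k' : HasProd (fun p : Nat.Primes => (1 - (((p : ℕ) : ℝ) ^ (2 * k))⁻¹)) Z2k⁻¹ := by
    have := hasProd_inv' hP2k hZ2k_pos.ne'
    simpa using this
  have hT : HasProd
      (fun p : Nat.Primes => (((p : ℕ) : ℝ) ^ k + 1) / (((p : ℕ) : ℝ) ^ k - 1))
      (Zk * Zk * Z2k⁻¹) := by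
    have := (hPk.mul hPk).mul hP2k'
    refine this.congr_fun fun p => ?_
    have h2 := hpk p
    have h1 : ((p : ℕ) : ℝ) ^ k ≠ 0 := by positivity
    have h3 : ((p : ℕ) : ℝ) ^ k - 1 ≠ 0 := by intro h; rw [sub_eq_zero] at h; linarith
    have h4 : (1 : ℝ) - (((p : ℕ) : ℝ) ^ k)⁻¹ ≠ 0 := by
      rw [sub_ne_zero]
      intro h
      have := (inv_eq_one).mp h.symm
      linarith
    have h2k : ((p : ℕ) : ℝ) ^ (2 * k) = (((p : ℕ) : ℝ) ^ k) ^ 2 := by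
      rw [← pow_mul]; ring_nf
    field_simp [h2k]
    ring
  have hT' : HasProd
      (fun p : Nat.Primes =>
        ((((p : ℕ) : ℝ) ^ k + 1) / (((p : ℕ) : ℝ) ^ k - 1)) ^ (1 / 2 : ℝ))
      (Real.sqrt (Zk * Zk * Z2k⁻¹)) := by
    have := hasProd_sqrt hT fun p => by
      have := hpk p
      exact div_nonneg (by linarith) (by linarith)
    exact this.congr_fun fun p => (Real.sqrt_eq_rpow _).symm
  refine ⟨hT'.multipliable, ?_⟩
  have hval : Z2k = (-1 : ℝ) ^ (k + 1) * (2 : ℝ) ^ (2 * k - 1) * π ^ (2 * k) *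
      (bernoulli (2 * k) : ℝ) / ((2 * k).factorial : ℝ) := by
    calc Z2k = ∑' n : ℕ, 1 / (n : ℝ) ^ (2 * k) := tsum_congr fun n => (one_div _).symm
    _ = _ := (hasSum_zeta_nat (show k ≠ 0 by omega)).tsum_eq
  have hπ : (0:ℝ) < π ^ k := by positivity
  have hπ2 : (0:ℝ) < π ^ (2 * k) := by positivity
  have hc : (-1 : ℝ) ^ (k + 1) * (bernoulli (2 * k) : ℝ) * 2 ^ (2 * k - 1) /
      ((2 * k).factorial : ℝ) = Z2k / π ^ (2 * k) := by
    rw [hval]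
    have hfac : ((2 * k).factorial : ℝ) ≠ 0 := by positivity
    field_simp
  have hsqrt : Real.sqrt (Zk * Zk * Z2k⁻¹) = Zk / Real.sqrt Z2k := by
    rw [Real.sqrt_mul (by positivity), Real.sqrt_mul_self hZk_pos.le,
      Real.sqrt_inv, div_eq_mul_inv]
  have hsqrtZ2k_pos : 0 < Real.sqrt Z2k := Real.sqrt_pos.mpr hZ2k_pos
  have hkey : π ^ k *
      Real.sqrt ((-1) ^ (k + 1) * (bernoulli (2 * k) : ℝ) * 2 ^ (2 * k - 1) /
        ((2 * k).factorial : ℝ)) *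
      (∏' p : Nat.Primes,
        ((((p : ℕ) : ℝ) ^ k + 1) / (((p : ℕ) : ℝ) ^ k - 1)) ^ (1 / 2 : ℝ)) = Zk := by
    rw [hT'.tprod_eq, hc, hsqrt]
    have hπ2k : π ^ (2 * k) = (π ^ k) ^ 2 := by rw [← pow_mul]; ring_nf
    rw [Real.sqrt_div hZ2k_pos.le, hπ2k, Real.sqrt_sq hπ.le]
    field_simp
  rw [hkey]
  rw [zeta_nat_eq_tsum_of_gt_one (show 1 < k by omega), hZk]
  rw [Complex.ofReal_tsum]
  exact tsum_congr fun n => by push_cast [one_div]; ring
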